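/- Strategies that cooperate outside a commitment are never evolutionarily stable: assume T > R > P > S. For Π ∈ {Π_R, Π_P} with any ε, any u, any α ∈ [0,1], and any χ ∈ [0,1), none of the strategies ACC, ADC, NCC, NDC is an evolutionarily stable strategy of the noisy payoff matrix Π̃. (Specifically, Π̃(ACD,ACC) − Π̃(ACC,ACC) = χ(2−χ)(T−R), Π̃(ADD,ADC) − Π̃(ADC,ADC) = χ(2−χ)(T−R), Π̃(NCD,NCC) − Π̃(NCC,NCC) = (1−χ²)(T−R), and Π̃(NDD,NDC) − Π̃(NDC,NDC) = (1−χ²)(T−R); in the cases where these differences vanish at χ = 0, the corresponding second-order ESS comparisons are equalities, so the ESS conditions fail.) -/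
import Mathlib


/-- A strategy in the commitment game: whether to accept a prior commitment
(`commit = true` means "A"), the action if a commitment is formed
(`inAct = true` means "C"), and the action if no commitment is formed
(`outAct = true` means "C"). -/
structure Strat where
  commit : Bool
  inAct : Bool
  outAct : Bool
deriving DecidableEq

def ACC : Strat := ⟨true, true, true⟩
def ACD : Strat := ⟨true, true, false⟩
def ADC : Strat := ⟨true, false, true⟩
def ADD : Strat := ⟨true, false, false⟩
def NCC : Strat := ⟨false, true, true⟩
def NCD : Strat := ⟨false, true, false⟩
def NDC : Strat := ⟨false, false, true⟩
def NDD : Strat := ⟨false, false, false⟩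

/-- Row player's payoff in the one-shot Prisoner's Dilemma with payoffs
`T, R, P, S`; `true` codes cooperation. -/
def pd (T R P S : ℝ) (myC otherC : Bool) : ℝ :=
  if myC then (if otherC then R else S) else (if otherC then T else P)

/-- The reward payoff matrix `Π_R`: the row player receives its PD payoff
(commitment formed iff both commit; then each pays `ε/2` and plays its
in-commitment action, otherwise both play their no-commitment actions),
plus `α·u` if it accepted the commitment, plus an additional `(1−α)·u`
if a commitment is formed and it cooperates in it. -/
noncomputable def payR (T R P S ε u α : ℝ) (s t : Strat) : ℝ :=
  (if s.commit ∧ t.commit then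
      pd T R P S s.inAct t.inAct - ε / 2 + (if s.inAct then (1 - α) * u else 0)
   else pd T R P S s.outAct t.outAct)
  + (if s.commit then α * u else 0)

/-- The punishment payoff matrix `Π_P`: as `Π_R` except that instead of the
reward `(1−α)·u` for compliance, the amount `(1−α)·u` is subtracted when a
commitment is formed and the row player defects in it. -/
noncomputable def payP (T R P S ε u α : ℝ) (s t : Strat) : ℝ :=
  (if s.commit ∧ t.commit then
      pd T R P S s.inAct t.inAct - ε / 2 - (if s.inAct then 0 else (1 - α) * u)
   else pd T R P S s.outAct t.outAct)
  + (if s.commit then α * u else 0)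

/-- Flip the participation decision of a strategy (A ↔ N). -/
def flipPart (s : Strat) : Strat := ⟨!s.commit, s.inAct, s.outAct⟩

/-- The noisy payoff matrix `Π̃`: with probability `χ` each player independently
errs in its decision whether to join the commitment. -/
noncomputable def noisy (χ : ℝ) (M : Strat → Strat → ℝ) (s t : Strat) : ℝ :=
  (1 - χ) ^ 2 * M s t + χ * (1 - χ) * (M (flipPart s) t + M s (flipPart t))
    + χ ^ 2 * M (flipPart s) (flipPart t)

/-- Strategy `a` is risk-dominant against strategy `b` under payoff matrix `Π`. -/
def RiskDom (M : Strat → Strat → ℝ) (a b : Strat) : Prop :=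
  M a a + M a b > M b a + M b b

/-- `x` is an evolutionarily stable strategy (ESS) of the payoff matrix `Π`. -/
def IsESS (M : Strat → Strat → ℝ) (x : Strat) : Prop :=
  ∀ y : Strat, y ≠ x → M x x > M y x ∨ (M x x = M y x ∧ M x y > M y y)

/-- **Strategies that cooperate outside a commitment are never evolutionarily
stable.**
Assume `T > R > P > S`. For `Π ∈ {Π_R, Π_P}` with any `ε`, `u`, `α ∈ [0,1]` and any
`χ ∈ [0,1)`, none of ACC, ADC, NCC, NDC is an ESS of the noisy matrix `Π̃`.
Specifically, `Π̃(ACD,ACC) − Π̃(ACC,ACC) = χ(2−χ)(T−R)`,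
`Π̃(ADD,ADC) − Π̃(ADC,ADC) = χ(2−χ)(T−R)`,
`Π̃(NCD,NCC) − Π̃(NCC,NCC) = (1−χ²)(T−R)`, and
`Π̃(NDD,NDC) − Π̃(NDC,NDC) = (1−χ²)(T−R)`; and where these differences vanish at
`χ = 0`, the corresponding second-order ESS comparisons are equalities. -/
theorem out_of_commitment_cooperators_never_ESS (T R P S ε u α χ : ℝ)
    (hTR : T > R) (hRP : R > P) (hPS : P > S)
    (hα : 0 ≤ α ∧ α ≤ 1) (hχ : 0 ≤ χ ∧ χ < 1)
    (M : Strat → Strat → ℝ)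
    (hM : M = payR T R P S ε u α ∨ M = payP T R P S ε u α) :
    (¬ IsESS (noisy χ M) ACC) ∧ (¬ IsESS (noisy χ M) ADC) ∧
    (¬ IsESS (noisy χ M) NCC) ∧ (¬ IsESS (noisy χ M) NDC) ∧
    (noisy χ M ACD ACC - noisy χ M ACC ACC = χ * (2 - χ) * (T - R)) ∧
    (noisy χ M ADD ADC - noisy χ M ADC ADC = χ * (2 - χ) * (T - R)) ∧
    (noisy χ M NCD NCC - noisy χ M NCC NCC = (1 - χ ^ 2) * (T - R)) ∧
    (noisy χ M NDD NDC - noisy χ M NDC NDC = (1 - χ ^ 2) * (T - R)) ∧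
    (χ = 0 →
      noisy χ M ACC ACD = noisy χ M ACD ACD ∧
      noisy χ M ADC ADD = noisy χ M ADD ADD) := by
  obtain ⟨hχ0, hχ1⟩ := hχ
  have hd1 : noisy χ M ACD ACC - noisy χ M ACC ACC = χ * (2 - χ) * (T - R) := by
    rcases hM with h | h <;> subst h <;>
      simp [noisy, payR, payP, pd, ACC, ACD, flipPart] <;> ring
  have hd2 : noisy χ M ADD ADC - noisy χ M ADC ADC = χ * (2 - χ) * (T - R) := by
    rcases hM with h | h <;> subst h <;>
      simp [noisy, payR, payP, pd, ADC, ADD, flipPart] <;> ring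
  have hd3 : noisy χ M NCD NCC - noisy χ M NCC NCC = (1 - χ ^ 2) * (T - R) := by
    rcases hM with h | h <;> subst h <;>
      simp [noisy, payR, payP, pd, NCC, NCD, flipPart] <;> ring
  have hd4 : noisy χ M NDD NDC - noisy χ M NDC NDC = (1 - χ ^ 2) * (T - R) := by
    rcases hM with h | h <;> subst h <;>
      simp [noisy, payR, payP, pd, NDC, NDD, flipPart] <;> ring
  have heq : χ = 0 →
      noisy χ M ACC ACD = noisy χ M ACD ACD ∧
      noisy χ M ADC ADD = noisy χ M ADD ADD := by
    intro h0
    subst h0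
    rcases hM with h | h <;> subst h <;>
      constructor <;>
      simp [noisy, payR, payP, pd, ACC, ACD, ADC, ADD, flipPart] <;> ring
  have hTR' : T - R > 0 := by linarith
  have hsq : (0:ℝ) < 1 - χ ^ 2 := by nlinarith
  have hpos3 : 0 < (1 - χ ^ 2) * (T - R) := mul_pos hsq hTR'
  refine ⟨?_, ?_, ?_, ?_, hd1, hd2, hd3, hd4, heq⟩
  · intro h
    rcases eq_or_lt_of_le hχ0 with h0 | h0
    · have hz : noisy χ M ACD ACC - noisy χ M ACC ACC = 0 := by
        rw [hd1, ← h0]; ring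
      have he := (heq h0.symm).1
      rcases h ACD (by decide) with h1 | ⟨h1, h2⟩ <;> linarith
    · have hp : 0 < χ * (2 - χ) * (T - R) :=
        mul_pos (mul_pos h0 (by linarith)) hTR'
      rcases h ACD (by decide) with h1 | ⟨h1, h2⟩ <;> linarith
  · intro h
    rcases eq_or_lt_of_le hχ0 with h0 | h0
    · have hz : noisy χ M ADD ADC - noisy χ M ADC ADC = 0 := by
        rw [hd2, ← h0]; ring
      have he := (heq h0.symm).2
      rcases h ADD (by decide) with h1 | ⟨h1, h2⟩ <;> linarith
    · have hp : 0 < χ * (2 - χ) * (T - R) :=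
        mul_pos (mul_pos h0 (by linarith)) hTR'
      rcases h ADD (by decide) with h1 | ⟨h1, h2⟩ <;> linarith
  · intro h
    rcases h NCD (by decide) with h1 | ⟨h1, h2⟩ <;> linarith
  · intro h
    rcases h NDD (by decide) with h1 | ⟨h1, h2⟩ <;> linarith
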